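/- Let n be a natural number and let G = (ℤ/2)^n. Every 2-cocycle c : G × G → ℤ/2 (for the trivial action) is cohomologous to a sum of cup-product cocycles: there exist finitely many group homomorphisms ψ₁, …, ψ_m, ψ'₁, …, ψ'_m : G → ℤ/2 and a function f : G → ℤ/2 such that c(σ,τ) = Σ_{i=1}^{m} ψᵢ(σ)·ψ'ᵢ(τ) + f(σ) + f(τ) − f(στ) for all σ, τ ∈ G. (In cohomological terms: H²(G, ℤ/2) equals its decomposable part H²_dec(G), the subgroup generated by cup products of elements of H¹(G, ℤ/2).) -/

import Mathlib

/-- ordered "sum of singles" associated with a list of indices -/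
private def SLst (n : ℕ) : List (Fin n) → (Fin n → ZMod 2) → (Fin n → ZMod 2)
  | [], _ => 0
  | i :: l, σ => Pi.single i (σ i) + SLst n l σ

/-- the section discrepancy function (first component of the ordered product of the
canonical section on generators in the extension determined by `c`) -/
private def TA (n : ℕ) (c : (Fin n → ZMod 2) → (Fin n → ZMod 2) → ZMod 2) :
    List (Fin n) → (Fin n → ZMod 2) → ZMod 2
  | [], _ => -(c 0 0)
  | i :: l, σ => TA n c l σ + c (Pi.single i (σ i)) (SLst n l σ)

/-- the bilinear-plus-constant "collection" cocycle -/
private def BLst (n : ℕ) (c : (Fin n → ZMod 2) → (Fin n → ZMod 2) → ZMod 2) :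
    List (Fin n) → (Fin n → ZMod 2) → (Fin n → ZMod 2) → ZMod 2
  | [], _, _ => 0
  | i :: l, σ, τ =>
      (c (SLst n l σ) (Pi.single i (τ i)) - c (Pi.single i (τ i)) (SLst n l σ))
        + c (Pi.single i (σ i)) (Pi.single i (τ i)) + BLst n c l σ τ

/-- "is a finite sum of products of additive characters" -/
private def IsB {n : ℕ} (h : (Fin n → ZMod 2) → (Fin n → ZMod 2) → ZMod 2) : Prop :=
  ∃ (m : ℕ) (ψ ψ' : Fin m → ((Fin n → ZMod 2) →+ ZMod 2)),
    ∀ σ τ, h σ τ = ∑ i, ψ i σ * ψ' i τ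

private theorem isB_zero {n : ℕ} : IsB (n := n) (fun _ _ => 0) :=
  ⟨0, fun i => i.elim0, fun i => i.elim0, by simp⟩

private theorem isB_add {n : ℕ} {h₁ h₂ : (Fin n → ZMod 2) → (Fin n → ZMod 2) → ZMod 2}
    (H1 : IsB h₁) (H2 : IsB h₂) : IsB (fun σ τ => h₁ σ τ + h₂ σ τ) := by
  obtain ⟨m₁, ψ₁, ψ₁', e₁⟩ := H1
  obtain ⟨m₂, ψ₂, ψ₂', e₂⟩ := H2
  refine ⟨m₁ + m₂, Fin.append ψ₁ ψ₂, Fin.append ψ₁' ψ₂', fun σ τ => ?_⟩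
  rw [Fin.sum_univ_add]
  simp only [Fin.append_left, Fin.append_right]
  rw [e₁, e₂]

private theorem isB_atom {n : ℕ} (k j : Fin n) (g : ZMod 2) :
    IsB (n := n) (fun σ τ => σ k * τ j * g) := by
  refine ⟨1, fun _ => Pi.evalAddMonoidHom (fun _ => ZMod 2) k,
    fun _ => (AddMonoidHom.mulLeft g).comp (Pi.evalAddMonoidHom (fun _ => ZMod 2) j),
    fun σ τ => ?_⟩
  simp only [Fin.sum_univ_one, AddMonoidHom.coe_comp, Function.comp_apply,
    AddMonoidHom.coe_mulLeft, Pi.evalAddMonoidHom_apply]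
  ring

/-- Let `G = (ℤ/2)ⁿ`.  Every 2-cocycle `c : G × G → ℤ/2` (trivial action) is cohomologous
to a finite sum of cup-product cocycles `(σ,τ) ↦ ψᵢ(σ)ψ'ᵢ(τ)`: the group `H²(G, ℤ/2)`
equals its decomposable part `H²_dec(G)`. -/
theorem H2_equals_decomposable_q_two (n : ℕ)
    (c : (Fin n → ZMod 2) → (Fin n → ZMod 2) → ZMod 2)
    (hcocycle : ∀ σ τ ρ : Fin n → ZMod 2, c σ τ + c (σ + τ) ρ = c τ ρ + c σ (τ + ρ)) :
    ∃ (m : ℕ) (ψ ψ' : Fin m → ((Fin n → ZMod 2) →+ ZMod 2))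
      (f : (Fin n → ZMod 2) → ZMod 2),
      ∀ σ τ : Fin n → ZMod 2,
        c σ τ = (∑ i, ψ i σ * ψ' i τ) + f σ + f τ - f (σ + τ) := by
  have h0 : ∀ σ, c 0 σ = c 0 0 := by
    intro σ
    have h := hcocycle 0 0 σ
    simp only [add_zero, zero_add] at h
    exact (add_right_cancel h).symm
  have h0' : ∀ σ, c σ 0 = c 0 0 := by
    intro σ
    have h := hcocycle σ 0 0
    simp only [add_zero, zero_add] at h
    exact add_right_cancel h
  -- additivity of the commutator pairing `γ s t = c s t - c t s` in the first variable
  have hgadd : ∀ s s' t : Fin n → ZMod 2,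
      c (s + s') t - c t (s + s') = (c s t - c t s) + (c s' t - c t s') := by
    intro s s' t
    have A := hcocycle s s' t
    have B := hcocycle s t s'
    rw [add_comm t s'] at B
    have C := hcocycle t s s'
    rw [add_comm t s] at C
    linear_combination A - B + C
  -- additivity of SLst
  have hSadd : ∀ (l : List (Fin n)) (σ τ : Fin n → ZMod 2),
      SLst n l (σ + τ) = SLst n l σ + SLst n l τ := by
    intro l σ τ
    induction l with
    | nil => show (0 : Fin n → ZMod 2) = 0 + 0; rw [add_zero]
    | cons i l ih =>
      show Pi.single i ((σ + τ) i) + SLst n l (σ + τ)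
        = (Pi.single i (σ i) + SLst n l σ) + (Pi.single i (τ i) + SLst n l τ)
      rw [ih, show Pi.single (M := fun _ : Fin n => ZMod 2) i ((σ + τ) i) = Pi.single i (σ i) + Pi.single i (τ i) from
        Pi.single_add (f := fun _ : Fin n => ZMod 2) i (σ i) (τ i), add_add_add_comm]
  -- the key collection identity
  have KA : ∀ (l : List (Fin n)) (σ τ : Fin n → ZMod 2),
      TA n c l σ + TA n c l τ + c (SLst n l σ) (SLst n l τ)
        = BLst n c l σ τ + TA n c l (σ + τ) := by
    intro l
    induction l with
    | nil =>
      intro σ τ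
      show -(c 0 0) + -(c 0 0) + c 0 0 = 0 + -(c 0 0)
      ring
    | cons i l ih =>
      intro σ τ
      show (TA n c l σ + c (Pi.single i (σ i)) (SLst n l σ))
          + (TA n c l τ + c (Pi.single i (τ i)) (SLst n l τ))
          + c (Pi.single i (σ i) + SLst n l σ) (Pi.single i (τ i) + SLst n l τ)
        = ((c (SLst n l σ) (Pi.single i (τ i)) - c (Pi.single i (τ i)) (SLst n l σ))
            + c (Pi.single i (σ i)) (Pi.single i (τ i)) + BLst n c l σ τ)
          + (TA n c l (σ + τ) + c (Pi.single i ((σ + τ) i)) (SLst n l (σ + τ)))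
      rw [hSadd l σ τ]
      rw [show Pi.single (M := fun _ : Fin n => ZMod 2) i ((σ + τ) i) = Pi.single i (σ i) + Pi.single i (τ i) from
        Pi.single_add (f := fun _ : Fin n => ZMod 2) i (σ i) (τ i)]
      set P : Fin n → ZMod 2 := Pi.single i (σ i) with hP
      set Q : Fin n → ZMod 2 := Pi.single i (τ i) with hQ
      set S := SLst n l σ
      set T := SLst n l τ
      have h1 := hcocycle (P + S) Q T
      have h2 := hcocycle (P + Q) S T
      rw [add_right_comm P Q S] at h2
      have h3 := hcocycle P S Q
      have h4 := hcocycle P Q S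
      rw [add_comm Q S] at h4
      linear_combination ih σ τ - h1 + h2 + h3 - h4
  -- SLst over the full range is the identity
  have hSfin : ∀ σ, SLst n (List.finRange n) σ = σ := by
    intro σ
    have h1 : ∀ l : List (Fin n),
        SLst n l σ = (l.map (fun k => (Pi.single k (σ k) : Fin n → ZMod 2))).sum := by
      intro l
      induction l with
      | nil => rfl
      | cons k l ih =>
        show Pi.single k (σ k) + SLst n l σ = _
        rw [ih, List.map_cons, List.sum_cons]
    rw [h1, ← Fin.sum_univ_def]
    exact Finset.univ_sum_single σ
  -- main scalar identity
  have hmain : ∀ σ τ, c σ τ = BLst n c (List.finRange n) σ τ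
      + TA n c (List.finRange n) (σ + τ)
      - TA n c (List.finRange n) σ - TA n c (List.finRange n) τ := by
    intro σ τ
    have h := KA (List.finRange n) σ τ
    rw [hSfin, hSfin] at h
    linear_combination h
  -- case analysis helper on ZMod 2
  have h2cases : ∀ x : ZMod 2, x = 0 ∨ x = 1 := by decide
  -- atoms
  have hatom : ∀ (k j : Fin n) (σ τ : Fin n → ZMod 2),
      c (Pi.single k (σ k)) (Pi.single j (τ j)) - c (Pi.single j (τ j)) (Pi.single k (σ k))
        = σ k * τ j * (c (Pi.single k 1) (Pi.single j 1) - c (Pi.single j 1) (Pi.single k 1)) := by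
    intro k j σ τ
    rcases h2cases (σ k) with h | h <;> rcases h2cases (τ j) with h' | h'
    · rw [h, h', Pi.single_zero, Pi.single_zero]; ring
    · rw [h, h', Pi.single_zero, h0' (Pi.single j 1), h0 (Pi.single j 1)]; ring
    · rw [h, h', Pi.single_zero, h0' (Pi.single k 1), h0 (Pi.single k 1)]; ring
    · rw [h, h']; ring
  have hdiag : ∀ (j : Fin n) (σ τ : Fin n → ZMod 2),
      c (Pi.single j (σ j)) (Pi.single j (τ j))
        = σ j * τ j * (c (Pi.single j 1) (Pi.single j 1) - c 0 0) + c 0 0 := by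
    intro j σ τ
    rcases h2cases (σ j) with h | h <;> rcases h2cases (τ j) with h' | h'
    · rw [h, h', Pi.single_zero]; ring
    · rw [h, h', Pi.single_zero, h0 (Pi.single j 1)]; ring
    · rw [h, h', Pi.single_zero, h0' (Pi.single j 1)]; ring
    · rw [h, h']; ring
  -- the commutator part of BLst is a sum of products of characters
  have hgIsB : ∀ (l : List (Fin n)) (i : Fin n),
      IsB (n := n) (fun σ τ =>
        c (SLst n l σ) (Pi.single i (τ i)) - c (Pi.single i (τ i)) (SLst n l σ)) := by
    intro l i
    induction l with
    | nil =>
      have he : (fun (σ τ : Fin n → ZMod 2) =>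
          c (SLst n [] σ) (Pi.single i (τ i)) - c (Pi.single i (τ i)) (SLst n [] σ))
          = fun _ _ => (0 : ZMod 2) := by
        funext σ τ
        show c 0 (Pi.single i (τ i)) - c (Pi.single i (τ i)) 0 = 0
        rw [h0 (Pi.single i (τ i)), h0' (Pi.single i (τ i))]
        ring
      rw [he]
      exact isB_zero
    | cons k l ih =>
      have he : (fun (σ τ : Fin n → ZMod 2) =>
          c (SLst n (k :: l) σ) (Pi.single i (τ i)) - c (Pi.single i (τ i)) (SLst n (k :: l) σ))
          = fun σ τ =>
            (σ k * τ i * (c (Pi.single k 1) (Pi.single i 1) - c (Pi.single i 1) (Pi.single k 1)))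
            + (c (SLst n l σ) (Pi.single i (τ i)) - c (Pi.single i (τ i)) (SLst n l σ)) := by
        funext σ τ
        show c (Pi.single k (σ k) + SLst n l σ) (Pi.single i (τ i))
            - c (Pi.single i (τ i)) (Pi.single k (σ k) + SLst n l σ) = _
        rw [hgadd, hatom k i σ τ]
      rw [he]
      exact isB_add (isB_atom k i _) ih
  -- BLst is a sum of products of characters plus a constant
  have hBL : ∀ l : List (Fin n),
      ∃ (h : (Fin n → ZMod 2) → (Fin n → ZMod 2) → ZMod 2) (K : ZMod 2),
        IsB h ∧ ∀ σ τ, BLst n c l σ τ = h σ τ + K := by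
    intro l
    induction l with
    | nil => exact ⟨fun _ _ => 0, 0, isB_zero, fun σ τ => by simp [BLst]⟩
    | cons i l ih =>
      obtain ⟨h, K, hh, he⟩ := ih
      refine ⟨fun σ τ =>
        ((c (SLst n l σ) (Pi.single i (τ i)) - c (Pi.single i (τ i)) (SLst n l σ))
          + (σ i * τ i * (c (Pi.single i 1) (Pi.single i 1) - c 0 0))) + h σ τ,
        c 0 0 + K, isB_add (isB_add (hgIsB l i) (isB_atom i i _)) hh, fun σ τ => ?_⟩
      show (c (SLst n l σ) (Pi.single i (τ i)) - c (Pi.single i (τ i)) (SLst n l σ))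
          + c (Pi.single i (σ i)) (Pi.single i (τ i)) + BLst n c l σ τ = _
      rw [hdiag i σ τ, he σ τ]
      ring
  -- assemble
  obtain ⟨h, K, ⟨m, ψ, ψ', hs⟩, he⟩ := hBL (List.finRange n)
  refine ⟨m, ψ, ψ', fun σ => K - TA n c (List.finRange n) σ, fun σ τ => ?_⟩
  have h1 := hmain σ τ
  rw [he σ τ, hs σ τ] at h1
  linear_combination h1
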